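/- Let G be a gap sequence of genus g, λ the partition associated to G, and 0 ≤ k ≤ g−1. Then Σ_{i=1}^{m_k} a^{(k)}_i = N_{λ,k}, where N_{λ,k} = λ_{k+1}+⋯+λ_g. -/

import Mathlib

open MvPolynomial

/-- The polynomial `p_n(t)` defined by `exp(Σ_{n≥1} t_n k^n) = Σ_{n≥0} p_n(t) k^n`,
as a polynomial in the variables `t_1, t_2, ...` (variable `X n` stands for `t_n`). -/
noncomputable def pS (n : ℕ) : MvPolynomial ℕ ℚ :=
  ∑ m ∈ Finset.range (n + 1), (Nat.factorial m : ℚ)⁻¹ •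
    ∑ c ∈ Finset.univ.filter
        (fun c : Fin m → Fin (n + 1) =>
          (∑ j, ((c j : ℕ))) = n ∧ ∀ j, 1 ≤ (c j : ℕ)),
      ∏ j, X ((c j : ℕ))

/-- `p_n` for `n : ℤ`, with `p_n = 0` for `n < 0`. -/
noncomputable def pz (n : ℤ) : MvPolynomial ℕ ℚ :=
  if 0 ≤ n then pS n.toNat else 0

/-- The Schur function `s_λ(t) = det(p_{λ_i - i + j})_{1 ≤ i,j ≤ l}` (here `0`-indexed). -/
noncomputable def schur {l : ℕ} (lam : Fin l → ℕ) : MvPolynomial ℕ ℚ :=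
  Matrix.det (Matrix.of fun a b : Fin l =>
    pz ((lam a : ℤ) - ((a : ℕ) : ℤ) + ((b : ℕ) : ℤ)))

/-- Substitution `t_n ↦ (x_1^n + ⋯ + x_k^n)/n`, i.e. `t = [x_1] + ⋯ + [x_k]`. -/
noncomputable def toPowerSums (k : ℕ) (f : MvPolynomial ℕ ℚ) : MvPolynomial (Fin k) ℚ :=
  aeval (fun n : ℕ => (n : ℚ)⁻¹ • ∑ i : Fin k, X i ^ n) f

/-- Iterated partial derivative `∂_{i_1} ⋯ ∂_{i_r}` for a list `L = [i_1, ..., i_r]`. -/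
noncomputable def derivs (L : List ℕ) (f : MvPolynomial ℕ ℚ) : MvPolynomial ℕ ℚ :=
  L.foldr (fun i g => pderiv i g) f

/-- The entries of a partition `λ` padded by zeros (`0`-indexed). -/
def pad {l : ℕ} (lam : Fin l → ℕ) (a : ℕ) : ℕ := if h : a < l then lam ⟨a, h⟩ else 0

/-- `w_i`: the `(i+1)`-st smallest element of `G` (0-indexed: `wseq G 0 = w_1`). -/
def wseq (G : Finset ℕ) (i : ℕ) : ℕ := (G.sort (· ≤ ·)).getD i 0

/-- `w_i^*`: the `(i+1)`-st smallest element of the complement of `G`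
(0-indexed: `wstar G 0 = w_1^* = 0`). -/
noncomputable def wstar (G : Finset ℕ) (i : ℕ) : ℕ := Nat.nth (fun n => n ∉ G) i

/-- `m_k = #{i : w_i^* < g - k}`, the number of non-gaps below `g - k`. -/
def gapm (G : Finset ℕ) (g k : ℕ) : ℕ :=
  ((Finset.range (g - k)).filter (fun n => n ∉ G)).card

/-- `a^{(k)}_{j+1} = w_{g-k-j} - w_{j+1}^*` (0-indexed in `j`, `0 ≤ j < m_k`). -/
noncomputable def gapa (G : Finset ℕ) (g k j : ℕ) : ℕ :=
  wseq G (g - k - j - 1) - wstar G j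

/-- The partition associated to the gap sequence `G`:
`λ = (w_g, ..., w_1) - (g-1, ..., 1, 0)`, i.e. `λ_{a+1} = w_{g-a} - (g-1-a)` (0-indexed `a`). -/
def gapPart (G : Finset ℕ) (g a : ℕ) : ℕ := wseq G (g - 1 - a) - (g - 1 - a)

/-- For a gap sequence `G` of genus `g`, its associated partition `λ`,
and `0 ≤ k ≤ g-1`: `Σ_{i=1}^{m_k} a^{(k)}_i = N_{λ,k} = λ_{k+1} + ⋯ + λ_g`. -/
theorem statement4 (g : ℕ) (hg : 1 ≤ g) (G : Finset ℕ)
    (hcard : G.card = g) (h0 : 0 ∉ G)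
    (hadd : ∀ a b : ℕ, a ∉ G → b ∉ G → a + b ∉ G)
    (k : ℕ) (hk : k < g) :
    ∑ j ∈ Finset.range (gapm G g k), gapa G g k j
      = ∑ a ∈ Finset.Ico k g, gapPart G g a := by
  classical
  have hinf : (setOf fun n => n ∉ G).Infinite := by
    have hset : (setOf fun n => n ∉ G) = (↑G : Set ℕ)ᶜ := by ext n; exact Iff.rfl
    rw [hset]
    exact G.finite_toSet.infinite_compl
  have hmc : gapm G g k = Nat.count (fun n => n ∉ G) (g - k) := by
    rw [gapm, Nat.count_eq_card_filter_range]
  have hmle : gapm G g k ≤ g - k := by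
    rw [gapm]
    exact le_trans (Finset.card_filter_le _ _) (by simp)
  -- basic facts about wseq
  have hw : ∀ {i : ℕ} (hi : i < g), wseq G i = G.orderEmbOfFin hcard ⟨i, hi⟩ := by
    intro i hi
    have hlen : i < (G.sort (· ≤ ·)).length := by
      rw [Finset.length_sort, hcard]; exact hi
    rw [wseq, List.getD_eq_getElem _ _ hlen, Finset.orderEmbOfFin_apply]
    rfl
  have hwmem : ∀ {i : ℕ}, i < g → wseq G i ∈ G := by
    intro i hi
    rw [hw hi]
    exact Finset.orderEmbOfFin_mem G hcard _
  have hwmono : ∀ {i j : ℕ}, i < j → j < g → wseq G i < wseq G j := by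
    intro i j hij hj
    rw [hw (hij.trans hj), hw hj]
    exact (G.orderEmbOfFin hcard).strictMono (by exact hij)
  have hwsurj : ∀ x ∈ G, ∃ i : ℕ, i < g ∧ wseq G i = x := by
    intro x hx
    have hx' : x ∈ Set.range (G.orderEmbOfFin hcard) := by
      rw [Finset.range_orderEmbOfFin]; exact hx
    obtain ⟨i, hi⟩ := hx'
    exact ⟨i, i.isLt, by rw [hw i.isLt]; simpa using hi⟩
  have hwle : ∀ i : ℕ, i < g → i ≤ wseq G i := by
    intro i
    induction i with
    | zero => exact fun _ => Nat.zero_le _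
    | succ n ih =>
      intro h
      have h1 : n < g := by omega
      have h2 := hwmono (show n < n + 1 by omega) h
      have h3 := ih h1
      omega
  have hwinj : ∀ {n : ℕ}, n ≤ g → Set.InjOn (wseq G) (Finset.range n) := by
    intro n hn a ha b hb hab
    rw [Finset.coe_range, Set.mem_Iio] at ha hb
    by_contra hne
    rcases Nat.lt_or_ge a b with h | h
    · exact absurd hab (hwmono h (by omega)).ne
    · exact absurd hab.symm (hwmono (show b < a by omega) (by omega)).ne
  -- the finset of gaps below g - k has cardinality g - k - gapm G g k
  have hTcard : ((Finset.range (g - k)).filter (fun n => n ∈ G)).card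
      = g - k - gapm G g k := by
    have hsplit := Finset.card_filter_add_card_filter_not
      (s := Finset.range (g - k)) (p := fun n => n ∈ G)
    rw [Finset.card_range] at hsplit
    have hS : ((Finset.range (g - k)).filter (fun n => ¬ n ∈ G)).card = gapm G g k := rfl
    omega
  -- key : wseq G i < g - k ↔ i < g - k - gapm G g k  (for i < g)
  have hkey : ∀ {i : ℕ}, i < g → (wseq G i < g - k ↔ i < g - k - gapm G g k) := by
    intro i hi
    constructor
    · intro hlt
      have himg : (Finset.range (i + 1)).image (wseq G)
          ⊆ (Finset.range (g - k)).filter (fun n => n ∈ G) := by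
        intro x hx
        obtain ⟨j, hj, hjx⟩ := Finset.mem_image.1 hx
        rw [Finset.mem_range] at hj
        have hjg : j < g := by omega
        have hle : wseq G j ≤ wseq G i := by
          rcases Nat.lt_or_ge j i with h | h
          · exact (hwmono h hi).le
          · have hji : j = i := by omega
            subst hji; exact le_rfl
        rw [Finset.mem_filter, Finset.mem_range]
        exact ⟨by omega, hjx ▸ hwmem hjg⟩
      have hij : ((Finset.range (i + 1)).image (wseq G)).card = i + 1 := by
        rw [Finset.card_image_of_injOn (hwinj (by omega)), Finset.card_range]
      have hcle := Finset.card_le_card himg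
      rw [hij, hTcard] at hcle
      omega
    · intro hic
      by_contra hge
      push_neg at hge
      have himg : (Finset.range (g - k)).filter (fun n => n ∈ G)
          ⊆ (Finset.range i).image (wseq G) := by
        intro x hx
        rw [Finset.mem_filter, Finset.mem_range] at hx
        obtain ⟨j, hj, hjx⟩ := hwsurj x hx.2
        have hji : j < i := by
          by_contra hji
          push_neg at hji
          have hle : wseq G i ≤ wseq G j := by
            rcases Nat.lt_or_ge i j with h | h
            · exact (hwmono h hj).le
            · have hij : i = j := by omega
              subst hij; exact le_rfl
          omega
        exact Finset.mem_image.2 ⟨j, Finset.mem_range.2 hji, hjx⟩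
      have hcle := Finset.card_le_card himg
      have h2 := Finset.card_image_le (s := Finset.range i) (f := wseq G)
      rw [hTcard] at hcle
      rw [Finset.card_range] at h2
      omega
  -- facts about wstar
  have hstar_lt : ∀ {j : ℕ}, j < gapm G g k → wstar G j < g - k := by
    intro j hj
    rw [hmc] at hj
    exact (Nat.lt_nth_iff_count_lt hinf).1 hj
  have hstar_mem : ∀ j : ℕ, wstar G j ∉ G := Nat.nth_mem_of_infinite hinf
  -- E1 : LHS + Σ wstar = Σ_{i ∈ Ico c (g-k)} wseq i
  have hE1 : (∑ j ∈ Finset.range (gapm G g k), gapa G g k j)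
        + (∑ j ∈ Finset.range (gapm G g k), wstar G j)
      = ∑ i ∈ Finset.Ico (g - k - gapm G g k) (g - k), wseq G i := by
    rw [← Finset.sum_add_distrib]
    have hterm : ∀ j ∈ Finset.range (gapm G g k),
        gapa G g k j + wstar G j = wseq G (g - k - j - 1) := by
      intro j hj
      rw [Finset.mem_range] at hj
      have h1 : wstar G j < g - k := hstar_lt hj
      have h2 : g - k - j - 1 < g := by omega
      have h3 : ¬ (g - k - j - 1 < g - k - gapm G g k) := by omega
      have h4 : ¬ (wseq G (g - k - j - 1) < g - k) := fun h => h3 ((hkey h2).1 h)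
      rw [gapa, Nat.sub_add_cancel (by omega)]
    rw [Finset.sum_congr rfl hterm]
    refine Finset.sum_nbij' (i := fun j => g - k - j - 1) (j := fun i => g - k - i - 1)
      ?_ ?_ ?_ ?_ ?_
    · intro j hj
      rw [Finset.mem_range] at hj
      simp only [Finset.mem_Ico]
      omega
    · intro i hi
      rw [Finset.mem_Ico] at hi
      simp only [Finset.mem_range]
      omega
    · intro j hj
      rw [Finset.mem_range] at hj
      try simp only []
      omega
    · intro i hi
      rw [Finset.mem_Ico] at hi
      try simp only []
      omega
    · intro j _
      rfl
  -- E2 : RHS + Σ_{i ∈ range (g-k)} i = Σ_{i ∈ range (g-k)} wseq i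
  have hE2 : (∑ a ∈ Finset.Ico k g, gapPart G g a) + (∑ i ∈ Finset.range (g - k), i)
      = ∑ i ∈ Finset.range (g - k), wseq G i := by
    have hre : ∀ f : ℕ → ℕ, ∑ a ∈ Finset.Ico k g, f a
        = ∑ i ∈ Finset.range (g - k), f (g - 1 - i) := by
      intro f
      refine Finset.sum_nbij' (i := fun a => g - 1 - a) (j := fun i => g - 1 - i)
        ?_ ?_ ?_ ?_ ?_
      · intro a ha; rw [Finset.mem_Ico] at ha; simp only [Finset.mem_range]; omega
      · intro i hi; rw [Finset.mem_range] at hi; simp only [Finset.mem_Ico]; omega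
      · intro a ha; rw [Finset.mem_Ico] at ha; (try simp only []); omega
      · intro i hi; rw [Finset.mem_range] at hi; (try simp only []); omega
      · intro a ha
        rw [Finset.mem_Ico] at ha
        try simp only []
        congr 1
        omega
    rw [hre (gapPart G g), ← Finset.sum_add_distrib]
    refine Finset.sum_congr rfl ?_
    intro i hi
    rw [Finset.mem_range] at hi
    have h1 : g - 1 - (g - 1 - i) = i := by omega
    have h3 := hwle i (by omega)
    rw [gapPart, h1]
    omega
  -- E3 : Σ_{i ∈ range c} wseq i + Σ wstar = Σ_{i ∈ range (g-k)} i
  have hE3 : (∑ i ∈ Finset.range (g - k - gapm G g k), wseq G i)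
        + (∑ j ∈ Finset.range (gapm G g k), wstar G j)
      = ∑ i ∈ Finset.range (g - k), i := by
    have himg1 : (Finset.range (g - k - gapm G g k)).image (wseq G)
        = (Finset.range (g - k)).filter (fun n => n ∈ G) := by
      ext n
      rw [Finset.mem_image, Finset.mem_filter, Finset.mem_range]
      constructor
      · rintro ⟨j, hj, rfl⟩
        rw [Finset.mem_range] at hj
        have hjg : j < g := by omega
        exact ⟨(hkey hjg).2 hj, hwmem hjg⟩
      · rintro ⟨hn, hnG⟩
        obtain ⟨j, hj, rfl⟩ := hwsurj n hnG
        exact ⟨j, Finset.mem_range.2 ((hkey hj).1 hn), rfl⟩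
    have himg2 : (Finset.range (gapm G g k)).image (wstar G)
        = (Finset.range (g - k)).filter (fun n => n ∉ G) := by
      ext n
      rw [Finset.mem_image, Finset.mem_filter, Finset.mem_range]
      constructor
      · rintro ⟨j, hj, rfl⟩
        rw [Finset.mem_range] at hj
        exact ⟨hstar_lt hj, hstar_mem j⟩
      · rintro ⟨hn, hnG⟩
        refine ⟨Nat.count (fun n => n ∉ G) n, Finset.mem_range.2 ?_, Nat.nth_count hnG⟩
        rw [hmc]
        have hnth : Nat.nth (fun n => n ∉ G) (Nat.count (fun n => n ∉ G) n) < g - k := by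
          rw [Nat.nth_count hnG]; exact hn
        exact (Nat.lt_nth_iff_count_lt hinf).2 hnth
    have hs1 : ∑ i ∈ Finset.range (g - k - gapm G g k), wseq G i
        = ∑ x ∈ (Finset.range (g - k)).filter (fun n => n ∈ G), x := by
      rw [← himg1, Finset.sum_image (hwinj (by omega))]
    have hs2 : ∑ j ∈ Finset.range (gapm G g k), wstar G j
        = ∑ x ∈ (Finset.range (g - k)).filter (fun n => n ∉ G), x := by
      rw [← himg2, Finset.sum_image]
      intro a _ b _ hab
      exact Nat.nth_injective hinf hab
    rw [hs1, hs2]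
    exact Finset.sum_filter_add_sum_filter_not _ _ _
  -- E4 : splitting the range
  have hE4 : (∑ i ∈ Finset.range (g - k - gapm G g k), wseq G i)
        + (∑ i ∈ Finset.Ico (g - k - gapm G g k) (g - k), wseq G i)
      = ∑ i ∈ Finset.range (g - k), wseq G i := by
    rw [Finset.range_eq_Ico, Finset.range_eq_Ico]
    exact Finset.sum_Ico_consecutive _ (Nat.zero_le _) (by omega : g - k - gapm G g k ≤ g - k)
  omega
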